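/- arXiv:1711.02291 — 5 statements merged into one kernel-verified Lean document; each statement's English description precedes it below -/
import Mathlib

section
/- Let {Π_i}_{i=1}^m and {Π'_j}_{j=1}^n be two complete families of nonzero orthogonal projectors on ℂ^d (i.e., Π_i = Π_i†, Π_iΠ_j = δ_{ij}Π_i, ∑_i Π_i = I, and likewise for the primed family). If the associated dephasing superoperators coincide, i.e., ∑_{i=1}^m Π_i X Π_i = ∑_{j=1}^n Π'_j X Π'_j for every d×d complex matrix X, then the two families coincide as sets: {Π_1,…,Π_m} = {Π'_1,…,Π'_n}. -/
open Matrix BigOperators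

private lemma mul_all_mul_eq_zero {d : ℕ} {A B : Matrix (Fin d) (Fin d) ℂ}
    (h : ∀ Y : Matrix (Fin d) (Fin d) ℂ, A * Y * B = 0) : A = 0 ∨ B = 0 := by
  by_contra hc
  push_neg at hc
  obtain ⟨hA, hB⟩ := hc
  rw [Ne, ← Matrix.ext_iff] at hA hB
  push_neg at hA hB
  obtain ⟨p, a, hpa⟩ := hA
  obtain ⟨b, q, hbq⟩ := hB
  simp only [Matrix.zero_apply] at hpa hbq
  have h2 := congrFun (congrFun (h (Matrix.single a b 1)) p) q
  simp [Matrix.mul_apply, Matrix.single, ite_and, Finset.mul_sum,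
    Finset.sum_mul, mul_ite, ite_mul, Finset.sum_ite_eq, Finset.sum_ite_eq'] at h2
  rcases h2 with h2 | h2 <;> [exact hpa h2; exact hbq h2]

/-- **Uniqueness of the projector family of a dephasing channel.**
If two complete families of nonzero orthogonal projectors on `ℂ^d` induce the same
dephasing superoperator `X ↦ ∑ i, Π i * X * Π i`, then they coincide as sets. -/
theorem dephasing_projector_family_unique {d m n : ℕ}
    (P : Fin m → Matrix (Fin d) (Fin d) ℂ)
    (Q : Fin n → Matrix (Fin d) (Fin d) ℂ)
    (hPne : ∀ i, P i ≠ 0)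
    (hPherm : ∀ i, (P i)ᴴ = P i)
    (hPorth : ∀ i j, P i * P j = if i = j then P i else 0)
    (hPsum : ∑ i, P i = 1)
    (hQne : ∀ j, Q j ≠ 0)
    (hQherm : ∀ j, (Q j)ᴴ = Q j)
    (hQorth : ∀ i j, Q i * Q j = if i = j then Q i else 0)
    (hQsum : ∑ j, Q j = 1)
    (hDeq : ∀ X : Matrix (Fin d) (Fin d) ℂ,
      ∑ i, P i * X * P i = ∑ j, Q j * X * Q j) :
    Set.range P = Set.range Q := by
  classical
  have hPfix : ∀ i, ∑ k, P k * P i * P k = P i := by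
    intro i
    have h : ∀ k, P k * P i * P k = if k = i then P i else 0 := by
      intro k
      by_cases h : k = i
      · subst h; simp [hPorth]
      · rw [hPorth, if_neg h, zero_mul, if_neg h]
    simp [h]
  have hQfix : ∀ j, ∑ l, Q l * Q j * Q l = Q j := by
    intro j
    have h : ∀ l, Q l * Q j * Q l = if l = j then Q j else 0 := by
      intro l
      by_cases h : l = j
      · subst h; simp [hQorth]
      · rw [hQorth, if_neg h, zero_mul, if_neg h]
    simp [h]
  have hPQ : ∀ i, P i = ∑ l, Q l * P i * Q l := by
    intro i; rw [← hDeq (P i), hPfix]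
  -- commutation
  have hcomm : ∀ i j, P i * Q j = Q j * P i := by
    intro i j
    have e1 : P i * Q j = Q j * P i * Q j := by
      conv_lhs => rw [hPQ i]
      rw [Finset.sum_mul]
      have h : ∀ l, (Q l * P i * Q l) * Q j = if l = j then Q j * P i * Q j else 0 := by
        intro l
        rw [mul_assoc, hQorth]
        by_cases h : l = j
        · subst h; rw [if_pos rfl, if_pos rfl]
        · rw [if_neg h, if_neg h, mul_zero]
      simp [h]
    have e2 : Q j * P i = Q j * P i * Q j := by
      conv_lhs => rw [hPQ i]
      rw [Finset.mul_sum]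
      have h : ∀ l, Q j * (Q l * P i * Q l) = if l = j then Q j * P i * Q j else 0 := by
        intro l
        rw [← mul_assoc, ← mul_assoc, hQorth]
        by_cases h : l = j
        · subst h; rw [if_pos rfl, if_pos rfl]
        · rw [if_neg (Ne.symm h), if_neg h, zero_mul, zero_mul]
      simp [h]
    exact e1.trans e2.symm
  -- product helper lemmas
  have hPmulPQ : ∀ (k i : Fin m) (j : Fin n),
      P k * (P i * Q j) = if k = i then P i * Q j else 0 := by
    intro k i j
    rw [← mul_assoc, hPorth]
    by_cases h : k = i
    · subst h; rw [if_pos rfl, if_pos rfl]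
    · rw [if_neg h, if_neg h, zero_mul]
  have hPQmulP : ∀ (k i : Fin m) (j : Fin n),
      (P i * Q j) * P k = if k = i then P i * Q j else 0 := by
    intro k i j
    rw [mul_assoc, ← hcomm, ← mul_assoc, hPorth]
    by_cases h : k = i
    · subst h; rw [if_pos rfl, if_pos rfl]
    · rw [if_neg (Ne.symm h), if_neg h, zero_mul]
  have hQmulPQ : ∀ (l : Fin n) (i : Fin m) (j : Fin n),
      Q l * (P i * Q j) = if l = j then P i * Q j else 0 := by
    intro l i j
    rw [← mul_assoc, ← hcomm, mul_assoc, hQorth]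
    by_cases h : l = j
    · subst h; rw [if_pos rfl, if_pos rfl]
    · rw [if_neg h, if_neg h, mul_zero]
  have hPQmulQ : ∀ (l : Fin n) (i : Fin m) (j : Fin n),
      (P i * Q j) * Q l = if l = j then P i * Q j else 0 := by
    intro l i j
    rw [mul_assoc, hQorth]
    by_cases h : l = j
    · subst h; rw [if_pos rfl, if_pos rfl]
    · rw [if_neg (Ne.symm h), if_neg h, mul_zero]
  -- key vanishing lemma 1
  have hkey1 : ∀ (i : Fin m) (j j' : Fin n), j ≠ j' →
      ∀ Y, (P i * Q j) * Y * (P i * Q j') = 0 := by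
    intro i j j' hjj' Y
    set X := (P i * Q j) * Y * (P i * Q j') with hX
    have hL : ∀ k, P k * X * P k = if k = i then X else 0 := by
      intro k
      have e : P k * X * P k = (P k * (P i * Q j)) * Y * ((P i * Q j') * P k) := by
        rw [hX]; simp only [Matrix.mul_assoc]
      rw [e, hPmulPQ, hPQmulP]
      by_cases h : k = i
      · simp only [if_pos h]; exact hX.symm
      · simp only [if_neg h, zero_mul, mul_zero]
    have hR : ∀ l, Q l * X * Q l = 0 := by
      intro l
      have e : Q l * X * Q l = (Q l * (P i * Q j)) * Y * ((P i * Q j') * Q l) := by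
        rw [hX]; simp only [Matrix.mul_assoc]
      rw [e, hQmulPQ, hPQmulQ]
      by_cases h : l = j
      · have h' : l ≠ j' := h ▸ hjj'
        simp only [if_neg h', mul_zero]
      · simp only [if_neg h, zero_mul]
    have heq := hDeq X
    simp only [hR, Finset.sum_const_zero] at heq
    have hLX : ∑ k, P k * X * P k = X := by simp [hL]
    rw [hLX] at heq
    exact heq
  -- key vanishing lemma 2
  have hkey2 : ∀ (j : Fin n) (i i' : Fin m), i ≠ i' →
      ∀ Y, (P i * Q j) * Y * (P i' * Q j) = 0 := by
    intro j i i' hii' Y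
    set X := (P i * Q j) * Y * (P i' * Q j) with hX
    have hL : ∀ k, P k * X * P k = 0 := by
      intro k
      have e : P k * X * P k = (P k * (P i * Q j)) * Y * ((P i' * Q j) * P k) := by
        rw [hX]; simp only [Matrix.mul_assoc]
      rw [e, hPmulPQ, hPQmulP]
      by_cases h : k = i
      · have h' : k ≠ i' := h ▸ hii'
        simp only [if_neg h', mul_zero]
      · simp only [if_neg h, zero_mul]
    have hR : ∀ l, Q l * X * Q l = if l = j then X else 0 := by
      intro l
      have e : Q l * X * Q l = (Q l * (P i * Q j)) * Y * ((P i' * Q j) * Q l) := by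
        rw [hX]; simp only [Matrix.mul_assoc]
      rw [e, hQmulPQ, hPQmulQ]
      by_cases h : l = j
      · simp only [if_pos h]; exact hX.symm
      · simp only [if_neg h, zero_mul, mul_zero]
    have heq := hDeq X
    simp only [hL, Finset.sum_const_zero] at heq
    have hRX : ∑ l, Q l * X * Q l = X := by simp [hR]
    rw [hRX] at heq
    exact heq.symm
  -- main lemma
  have hmain : ∀ i j, P i * Q j ≠ 0 → P i = Q j := by
    intro i j hne
    have h1 : ∀ j', j' ≠ j → P i * Q j' = 0 := by
      intro j' hj'
      exact (mul_all_mul_eq_zero (hkey1 i j j' (Ne.symm hj'))).resolve_left hne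
    have h2 : ∀ i', i' ≠ i → P i' * Q j = 0 := by
      intro i' hi'
      exact (mul_all_mul_eq_zero (hkey2 j i i' (Ne.symm hi'))).resolve_left hne
    have e1 : P i = P i * Q j := by
      conv_lhs => rw [← mul_one (P i), ← hQsum]
      rw [Finset.mul_sum]
      exact Finset.sum_eq_single j (fun b _ hb => h1 b hb)
        (fun h => absurd (Finset.mem_univ j) h)
    have e2 : Q j = P i * Q j := by
      conv_lhs => rw [← one_mul (Q j), ← hPsum]
      rw [Finset.sum_mul]
      exact Finset.sum_eq_single i (fun b _ hb => h2 b hb)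
        (fun h => absurd (Finset.mem_univ i) h)
    exact e1.trans e2.symm
  -- existence of nonzero pairings
  have hexP : ∀ i, ∃ j, P i * Q j ≠ 0 := by
    intro i
    by_contra hc
    push_neg at hc
    apply hPne i
    calc P i = P i * 1 := (mul_one _).symm
      _ = ∑ l, P i * Q l := by rw [← hQsum, Finset.mul_sum]
      _ = 0 := by simp [hc]
  have hexQ : ∀ j, ∃ i, P i * Q j ≠ 0 := by
    intro j
    by_contra hc
    push_neg at hc
    apply hQne j
    calc Q j = 1 * Q j := (one_mul _).symm
      _ = ∑ k, P k * Q j := by rw [← hPsum, Finset.sum_mul]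
      _ = 0 := by simp [hc]
  ext M
  simp only [Set.mem_range]
  constructor
  · rintro ⟨i, rfl⟩
    obtain ⟨j, hj⟩ := hexP i
    exact ⟨j, (hmain i j hj).symm⟩
  · rintro ⟨j, rfl⟩
    obtain ⟨i, hi⟩ := hexQ j
    exact ⟨i, hmain i j hi⟩
end

section
/- Let E be a linear map on d×d complex matrices that is unital (E(I) = I) and normal with respect to the Hilbert–Schmidt inner product (E ∘ E* = E* ∘ E, where E* is the Hilbert–Schmidt adjoint of E). Then ∑_{i=1}^d ( ⟨E(P_i), E(P_i)⟩ − ⟨D_B(E(P_i)), D_B(E(P_i))⟩ ) = (1/2) ∑_{i,j=1}^d ‖ (E∘D_B − D_B∘E)(|i⟩⟨j|) ‖_F², where ‖·‖_F is the Frobenius norm; that is, the (unnormalized) 2-norm coherence generating power of E equals half the squared Hilbert–Schmidt norm of the commutator [E, D_B]. -/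
open Matrix BigOperators

/-- The rank-one operator `|v i⟩⟨v j|`. -/
noncomputable def ketBra {d : ℕ} (v : Fin d → (Fin d → ℂ)) (i j : Fin d) :
    Matrix (Fin d) (Fin d) ℂ :=
  Matrix.vecMulVec (v i) (star (v j))

/-- The dephasing superoperator `D_B(X) = ∑ i, P_i X P_i`, `P_i = |v i⟩⟨v i|`. -/
noncomputable def dephase {d : ℕ} (v : Fin d → (Fin d → ℂ))
    (X : Matrix (Fin d) (Fin d) ℂ) : Matrix (Fin d) (Fin d) ℂ :=
  ∑ i, ketBra v i i * X * ketBra v i i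

section lemmas
variable {d : ℕ} (v : Fin d → (Fin d → ℂ))

lemma kb_mul_kb (i j k l : Fin d) :
    ketBra v i j * ketBra v k l = (star (v j) ⬝ᵥ v k) • ketBra v i l := by
  ext a b
  simp only [ketBra, Matrix.mul_apply, Matrix.vecMulVec_apply, Matrix.smul_apply,
    dotProduct, Finset.sum_mul, smul_eq_mul, Pi.star_apply]
  apply Finset.sum_congr rfl
  intro m _
  ring

lemma kb_conjT (i j : Fin d) : (ketBra v i j)ᴴ = ketBra v j i := by
  ext a b
  simp only [ketBra, Matrix.conjTranspose_apply, Matrix.vecMulVec_apply, Pi.star_apply,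
    star_star]
  rw [StarMul.star_mul, star_star]

lemma trace_mul_kb (M : Matrix (Fin d) (Fin d) ℂ) (i j : Fin d) :
    (M * ketBra v i j).trace = star (v j) ⬝ᵥ (M *ᵥ v i) := by
  simp only [ketBra, Matrix.trace, Matrix.diag_apply, Matrix.mul_apply,
    Matrix.vecMulVec_apply, dotProduct, Matrix.mulVec, Pi.star_apply,
    Finset.mul_sum]
  apply Finset.sum_congr rfl
  intro m _
  apply Finset.sum_congr rfl
  intro k _
  ring

lemma P_mul_mul_P (M : Matrix (Fin d) (Fin d) ℂ) (i j : Fin d) :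
    ketBra v i i * M * ketBra v j j = (star (v i) ⬝ᵥ (M *ᵥ v j)) • ketBra v i j := by
  ext a b
  simp only [ketBra, Matrix.mul_apply, Matrix.vecMulVec_apply, Matrix.smul_apply,
    dotProduct, Matrix.mulVec, Pi.star_apply, smul_eq_mul, Finset.sum_mul,
    Finset.mul_sum]
  rw [Finset.sum_comm]
  apply Finset.sum_congr rfl
  intro m _
  apply Finset.sum_congr rfl
  intro k _
  ring

lemma dephase_eq (M : Matrix (Fin d) (Fin d) ℂ) :
    dephase v M = ∑ k, (star (v k) ⬝ᵥ (M *ᵥ v k)) • ketBra v k k := by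
  unfold dephase
  exact Finset.sum_congr rfl fun k _ => P_mul_mul_P v M k k

end lemmas

section lemmas2
variable {d : ℕ} (v : Fin d → (Fin d → ℂ))

/-- matrix coefficient ⟨v i| A |v j⟩ -/
noncomputable def coefv (A : Matrix (Fin d) (Fin d) ℂ) (i j : Fin d) : ℂ :=
  star (v i) ⬝ᵥ (A *ᵥ v j)

lemma star_coefv (A : Matrix (Fin d) (Fin d) ℂ) (i j : Fin d) :
    star (coefv v A i j) = coefv v Aᴴ j i := by
  simp only [coefv, dotProduct, Matrix.mulVec, Matrix.conjTranspose_apply, Pi.star_apply,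
    Finset.mul_sum, star_sum]
  rw [Finset.sum_comm]
  apply Finset.sum_congr rfl
  intro m _
  apply Finset.sum_congr rfl
  intro k _
  simp only [star_mul', star_star]
  ring

lemma trace_conjT_kb (M : Matrix (Fin d) (Fin d) ℂ) (i j : Fin d) :
    (Mᴴ * ketBra v i j).trace = star (coefv v M i j) := by
  rw [trace_mul_kb, star_coefv]
  rfl

lemma trace_kb_mul (M : Matrix (Fin d) (Fin d) ℂ) (k : Fin d) :
    ((ketBra v k k)ᴴ * M).trace = coefv v M k k := by
  rw [kb_conjT, Matrix.trace_mul_comm, trace_mul_kb]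
  rfl

lemma dephase_eq' (M : Matrix (Fin d) (Fin d) ℂ) :
    dephase v M = ∑ k, coefv v M k k • ketBra v k k :=
  dephase_eq v M

lemma coefv_smul (a : ℂ) (M : Matrix (Fin d) (Fin d) ℂ) (i j : Fin d) :
    coefv v (a • M) i j = a * coefv v M i j := by
  simp [coefv, Matrix.smul_mulVec, dotProduct_smul]

lemma coefv_kb (hv : ∀ i j, star (v i) ⬝ᵥ v j = if i = j then 1 else 0) (i j k l : Fin d) :
    coefv v (ketBra v i j) k l = (if k = i then 1 else 0) * (if j = l then 1 else 0) := by
  simp only [coefv, ketBra]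
  have : Matrix.vecMulVec (v i) (star (v j)) *ᵥ v l = (star (v j) ⬝ᵥ v l) • v i := by
    ext a
    simp only [Matrix.mulVec, Matrix.vecMulVec_apply, dotProduct, Pi.smul_apply,
      smul_eq_mul, Finset.sum_mul, Pi.star_apply]
    exact Finset.sum_congr rfl fun m _ => by ring
  rw [this, dotProduct_smul, hv j l, hv k i, smul_eq_mul]
  ring

end lemmas2

section lemmas3
variable {d : ℕ} (v : Fin d → (Fin d → ℂ))

lemma coefv_sum {s : Finset (Fin d)} (f : Fin d → Matrix (Fin d) (Fin d) ℂ) (i j : Fin d) :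
    coefv v (∑ k ∈ s, f k) i j = ∑ k ∈ s, coefv v (f k) i j := by
  simp only [coefv, dotProduct, Matrix.mulVec, Matrix.sum_apply, Finset.sum_mul,
    Finset.mul_sum]
  rw [show ∀ g : Fin d → Fin d → Fin d → ℂ, ∑ m, ∑ l, ∑ c ∈ s, g m l c
      = ∑ m, ∑ c ∈ s, ∑ l, g m l c from fun g =>
        Finset.sum_congr rfl fun m _ => Finset.sum_comm, Finset.sum_comm]

lemma coefv_dephase (hv : ∀ i j, star (v i) ⬝ᵥ v j = if i = j then 1 else 0)
    (M : Matrix (Fin d) (Fin d) ℂ) (k : Fin d) :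
    coefv v (dephase v M) k k = coefv v M k k := by
  rw [dephase_eq', coefv_sum]
  have : ∀ l, coefv v (coefv v M l l • ketBra v l l) k k
      = (if k = l then 1 else 0) * coefv v M l l := by
    intro l
    rw [coefv_smul, coefv_kb v hv]
    by_cases h : k = l <;> simp [h]
  simp only [this, ite_mul, one_mul, zero_mul]
  simp

lemma ip_dephase_right (X Y : Matrix (Fin d) (Fin d) ℂ) :
    (Xᴴ * dephase v Y).trace = ∑ k, star (coefv v X k k) * coefv v Y k k := by
  rw [dephase_eq', Finset.mul_sum, Matrix.trace_sum]
  apply Finset.sum_congr rfl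
  intro k _
  rw [Matrix.mul_smul, Matrix.trace_smul, trace_conjT_kb, smul_eq_mul]
  ring

lemma ip_dephase_left (X Y : Matrix (Fin d) (Fin d) ℂ) :
    ((dephase v X)ᴴ * Y).trace = ∑ k, star (coefv v X k k) * coefv v Y k k := by
  rw [dephase_eq']
  rw [Matrix.conjTranspose_sum, Finset.sum_mul, Matrix.trace_sum]
  apply Finset.sum_congr rfl
  intro k _
  rw [Matrix.conjTranspose_smul, Matrix.smul_mul, Matrix.trace_smul,
    trace_kb_mul, smul_eq_mul]

lemma sumP (hv : ∀ i j, star (v i) ⬝ᵥ v j = if i = j then 1 else 0) :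
    ∑ i, ketBra v i i = (1 : Matrix (Fin d) (Fin d) ℂ) := by
  have key : (Matrix.of fun k i => v i k) * (Matrix.of fun k i => v i k)ᴴ = 1 := by
    rw [mul_eq_one_comm]
    ext i j
    simpa [Matrix.mul_apply, Matrix.conjTranspose_apply, dotProduct, Matrix.one_apply,
      mul_comm] using hv i j
  ext a b
  rw [← key]
  simp [Matrix.sum_apply, ketBra, Matrix.vecMulVec_apply, Matrix.mul_apply,
    Matrix.conjTranspose_apply]

lemma completeness (hv : ∀ i j, star (v i) ⬝ᵥ v j = if i = j then 1 else 0)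
    (A : Matrix (Fin d) (Fin d) ℂ) :
    (Aᴴ * A).trace = ∑ i, ∑ j, coefv v A i j * star (coefv v A i j) := by
  have h1 : A = (∑ i, ketBra v i i) * A * (∑ j, ketBra v j j) := by
    rw [sumP v hv]; simp
  calc (Aᴴ * A).trace = (Aᴴ * ((∑ i, ketBra v i i) * A * (∑ j, ketBra v j j))).trace := by
        rw [← h1]
    _ = ∑ i, ∑ j, (Aᴴ * (ketBra v i i * A * ketBra v j j)).trace := by
        simp only [Finset.sum_mul, Matrix.mul_sum, Matrix.trace_sum]
    _ = ∑ i, ∑ j, coefv v A i j * star (coefv v A i j) := by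
        apply Finset.sum_congr rfl
        intro i _
        apply Finset.sum_congr rfl
        intro j _
        rw [P_mul_mul_P, Matrix.mul_smul, Matrix.trace_smul, trace_conjT_kb, smul_eq_mul]
        rfl

end lemmas3

lemma cast_frob {d : ℕ} (C : Matrix (Fin d) (Fin d) ℂ) :
    ((∑ a, ∑ b, ‖C a b‖ ^ 2 : ℝ) : ℂ) = (Cᴴ * C).trace := by
  have hz : ∀ z : ℂ, ((‖z‖ ^ 2 : ℝ) : ℂ) = star z * z := by
    intro z
    rw [Complex.sq_norm, ← Complex.mul_conj, mul_comm]
    rfl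
  simp only [Matrix.trace, Matrix.diag_apply, Matrix.mul_apply,
    Matrix.conjTranspose_apply]
  rw [Complex.ofReal_sum, Finset.sum_comm]
  apply Finset.sum_congr rfl
  intro b _
  rw [Complex.ofReal_sum]
  apply Finset.sum_congr rfl
  intro a _
  exact hz _

lemma dephase_kb {d : ℕ} (v : Fin d → (Fin d → ℂ))
    (hv : ∀ i j, star (v i) ⬝ᵥ v j = if i = j then 1 else 0) (i j : Fin d) :
    dephase v (ketBra v i j) = if i = j then ketBra v i i else 0 := by
  rw [dephase_eq']
  rw [Finset.sum_eq_single i (fun k _ hk => by simp [coefv_kb v hv, hk]) (by simp)]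
  by_cases h : i = j
  · subst h; simp [coefv_kb v hv]
  · rw [coefv_kb v hv, if_pos rfl, if_neg (fun hji : j = i => h hji.symm), if_neg h]
    simp


/-- **2-norm CGP as a commutator for unital normal maps.**
Let `E` be a linear map on `d × d` complex matrices, unital (`E 1 = 1`) and normal with
respect to the Hilbert–Schmidt inner product `⟨X,Y⟩ = Tr(XᴴY)` (i.e. `E` commutes with its
Hilbert–Schmidt adjoint `E*`).  Then
`∑ i (⟨E P_i, E P_i⟩ − ⟨D_B(E P_i), D_B(E P_i)⟩)
  = ½ ∑_{i,j} ‖(E ∘ D_B − D_B ∘ E)(|i⟩⟨j|)‖_F²`. -/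
theorem cgp_unital_normal_eq_commutator {d : ℕ}
    (v : Fin d → (Fin d → ℂ))
    (hv : ∀ i j, star (v i) ⬝ᵥ v j = if i = j then 1 else 0)
    (E Estar : Matrix (Fin d) (Fin d) ℂ →ₗ[ℂ] Matrix (Fin d) (Fin d) ℂ)
    (hE_unital : E 1 = 1)
    (hadj : ∀ X Y : Matrix (Fin d) (Fin d) ℂ,
      ((Estar X)ᴴ * Y).trace = (Xᴴ * E Y).trace)
    (hnormal : ∀ X : Matrix (Fin d) (Fin d) ℂ, E (Estar X) = Estar (E X)) :
    ∑ i, (((E (ketBra v i i))ᴴ * E (ketBra v i i)).trace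
        - ((dephase v (E (ketBra v i i)))ᴴ * dephase v (E (ketBra v i i))).trace)
      = (((1 / 2 : ℝ) * ∑ i, ∑ j, ∑ a, ∑ b,
          ‖(E (dephase v (ketBra v i j)) - dephase v (E (ketBra v i j))) a b‖ ^ 2 : ℝ) : ℂ) := by
  -- notation
  set t : Fin d → ℂ := fun i => ((E (ketBra v i i))ᴴ * E (ketBra v i i)).trace with ht
  set R : Fin d → Fin d → ℂ := fun i j =>
    ∑ k, star (coefv v (E (ketBra v i j)) k k) * coefv v (E (ketBra v i j)) k k with hR
  -- star of trace
  have hstar : ∀ M N : Matrix (Fin d) (Fin d) ℂ,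
      star ((Mᴴ * N).trace) = (Nᴴ * M).trace := by
    intro M N
    rw [← Matrix.trace_conjTranspose, Matrix.conjTranspose_mul,
      Matrix.conjTranspose_conjTranspose]
  have hadj' : ∀ X Y : Matrix (Fin d) (Fin d) ℂ,
      (Xᴴ * Estar Y).trace = ((E X)ᴴ * Y).trace := by
    intro X Y
    rw [← hstar (Estar Y) X, hadj Y X, hstar]
  -- Tr(BᴴB) for B = dephase Y
  have hBB : ∀ Y : Matrix (Fin d) (Fin d) ℂ,
      ((dephase v Y)ᴴ * dephase v Y).trace
        = ∑ k, star (coefv v Y k k) * coefv v Y k k := by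
    intro Y
    rw [ip_dephase_left]
    exact Finset.sum_congr rfl fun k _ => by rw [coefv_dephase v hv]
  -- key: ∑_{ij} R i j = ∑_k t k
  have hkey : ∑ i, ∑ j, R i j = ∑ k, t k := by
    have swap : ∑ i, ∑ j, R i j
        = ∑ k, ∑ i, ∑ j, star (coefv v (E (ketBra v i j)) k k)
            * coefv v (E (ketBra v i j)) k k := by
      rw [hR]
      rw [show ∀ g : Fin d → Fin d → Fin d → ℂ, ∑ i, ∑ j, ∑ k, g i j k
          = ∑ i, ∑ k, ∑ j, g i j k from fun g =>
            Finset.sum_congr rfl fun m _ => Finset.sum_comm, Finset.sum_comm]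
    rw [swap]
    apply Finset.sum_congr rfl
    intro k _
    have hs : ∀ i j, coefv v (E (ketBra v i j)) k k
        = star (coefv v (Estar (ketBra v k k)) i j) := by
      intro i j
      rw [← trace_kb_mul, ← hadj, trace_conjT_kb]
    calc ∑ i, ∑ j, star (coefv v (E (ketBra v i j)) k k)
            * coefv v (E (ketBra v i j)) k k
        = ∑ i, ∑ j, coefv v (Estar (ketBra v k k)) i j
            * star (coefv v (Estar (ketBra v k k)) i j) := by
          apply Finset.sum_congr rfl; intro i _
          apply Finset.sum_congr rfl; intro j _
          rw [hs i j, star_star]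
      _ = ((Estar (ketBra v k k))ᴴ * Estar (ketBra v k k)).trace :=
          (completeness v hv _).symm
      _ = ((ketBra v k k)ᴴ * E (Estar (ketBra v k k))).trace := hadj _ _
      _ = ((ketBra v k k)ᴴ * Estar (E (ketBra v k k))).trace := by rw [hnormal]
      _ = t k := hadj' _ _
  -- per-term expansion of the commutator norm
  have hterm : ∀ i j,
      ((E (dephase v (ketBra v i j)) - dephase v (E (ketBra v i j)))ᴴ
        * (E (dephase v (ketBra v i j)) - dephase v (E (ketBra v i j)))).trace
      = (if i = j then t i - 2 * R i i else 0) + R i j := by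
    intro i j
    rw [dephase_kb v hv]
    by_cases h : i = j
    · subst h
      simp only [eq_self_iff_true, if_true]
      have e1 : ((E (ketBra v i i))ᴴ * dephase v (E (ketBra v i i))).trace = R i i := by
        rw [ip_dephase_right]
      have e2 : ((dephase v (E (ketBra v i i)))ᴴ * E (ketBra v i i)).trace = R i i := by
        rw [ip_dephase_left]
      have e3 := hBB (E (ketBra v i i))
      rw [Matrix.conjTranspose_sub, Matrix.sub_mul, Matrix.mul_sub, Matrix.mul_sub,
        Matrix.trace_sub, Matrix.trace_sub, Matrix.trace_sub, e1, e2, e3]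
      simp only [hR, ht]
      ring
    · simp only [if_neg h, map_zero, zero_sub, Matrix.conjTranspose_neg, Matrix.neg_mul,
        Matrix.mul_neg, neg_neg, zero_add]
      rw [hBB]
  -- rewrite the RHS cast
  have hcast : (((1 / 2 : ℝ) * ∑ i, ∑ j, ∑ a, ∑ b,
        ‖(E (dephase v (ketBra v i j)) - dephase v (E (ketBra v i j))) a b‖ ^ 2 : ℝ) : ℂ)
      = (1 / 2 : ℂ) * ∑ i, ∑ j,
          ((E (dephase v (ketBra v i j)) - dephase v (E (ketBra v i j)))ᴴ
            * (E (dephase v (ketBra v i j)) - dephase v (E (ketBra v i j)))).trace := by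
    rw [Complex.ofReal_mul, Complex.ofReal_sum]
    congr 1
    · norm_num
    · apply Finset.sum_congr rfl
      intro i _
      rw [Complex.ofReal_sum]
      exact Finset.sum_congr rfl fun j _ => cast_frob _
  rw [hcast]
  -- rewrite LHS
  have hL : ∀ i, ((E (ketBra v i i))ᴴ * E (ketBra v i i)).trace
      - ((dephase v (E (ketBra v i i)))ᴴ * dephase v (E (ketBra v i i))).trace
      = t i - R i i := by
    intro i
    rw [hBB, ht, hR]
  calc ∑ i, (((E (ketBra v i i))ᴴ * E (ketBra v i i)).trace
        - ((dephase v (E (ketBra v i i)))ᴴ * dephase v (E (ketBra v i i))).trace)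
      = ∑ i, (t i - R i i) := Finset.sum_congr rfl fun i _ => hL i
    _ = (1 / 2 : ℂ) * ∑ i, ∑ j,
          ((if i = j then t i - 2 * R i i else 0) + R i j) := by
        simp only [Finset.sum_add_distrib, Finset.sum_ite_eq, Finset.mem_univ, if_true]
        rw [hkey, Finset.sum_sub_distrib]
        rw [show ∑ i, (t i - 2 * R i i) = ∑ i, t i - 2 * ∑ i, R i i from by
          rw [Finset.sum_sub_distrib, Finset.mul_sum]]
        ring
    _ = (1 / 2 : ℂ) * ∑ i, ∑ j,
          ((E (dephase v (ketBra v i j)) - dephase v (E (ketBra v i j)))ᴴ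
            * (E (dephase v (ketBra v i j)) - dephase v (E (ketBra v i j)))).trace := by
        congr 1
        apply Finset.sum_congr rfl
        intro i _
        exact Finset.sum_congr rfl fun j _ => (hterm i j).symm
end

section
/- Let A be a d×d real matrix that is positive semidefinite and doubly stochastic (all entries nonnegative and every row and column sums to 1). Then Tr[ A ( I − A ) ] ≤ (d−1)/4. -/
open Matrix BigOperators Finset

/-- **A trace bound for positive semidefinite doubly stochastic matrices.**
If `A` is a `d × d` real matrix which is positive semidefinite and doubly stochastic
(nonnegative entries, all row sums and column sums equal to `1`), then
`Tr[A(I − A)]` ≤ `(d − 1)/4`. -/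
theorem trace_le_of_posSemidef_doublyStochastic {d : ℕ} (hd : 0 < d)
    (A : Matrix (Fin d) (Fin d) ℝ)
    (hpsd : A.PosSemidef)
    (hnonneg : ∀ i j, 0 ≤ A i j)
    (hrow : ∀ i, ∑ j, A i j = 1)
    (hcol : ∀ j, ∑ i, A i j = 1) :
    (A * (1 - A)).trace ≤ ((d : ℝ) - 1) / 4 := by
  have hsymm : ∀ i j, A j i = A i j := by
    intro i j
    have h := hpsd.isHermitian
    have := congrFun (congrFun h j) i
    simpa [Matrix.conjTranspose_apply] using this.symm
  have htrace : (A * (1 - A)).trace = (∑ i, A i i) - ∑ i, ∑ j, (A i j)^2 := by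
    rw [mul_sub, mul_one, trace_sub]
    have h2 : (A * A).trace = ∑ i, ∑ j, (A i j)^2 := by
      simp only [Matrix.trace, Matrix.diag, Matrix.mul_apply]
      refine Finset.sum_congr rfl fun i _ => Finset.sum_congr rfl fun j _ => ?_
      rw [hsymm i j, sq]
    rw [h2]
    rfl
  rw [htrace]
  rcases eq_or_lt_of_le (Nat.one_le_iff_ne_zero.mpr hd.ne') with h1 | h2
  · -- d = 1
    have hd1 : d = 1 := h1.symm
    subst hd1
    have h00 : A 0 0 = 1 := by simpa using hrow 0
    simp [Fin.sum_univ_one, h00]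
  · -- d ≥ 2
    set B : Fin d → Fin d → ℝ := fun i j => A i j - 1 / d with hB
    have hdR : (2:ℝ) ≤ d := by exact_mod_cast h2
    have hd0 : (0:ℝ) < d := by positivity
    -- row sums of B vanish
    have hBrow : ∀ i, ∑ j, B i j = 0 := by
      intro i
      simp [hB, Finset.sum_sub_distrib, hrow i, Finset.card_fin]
      field_simp
      norm_num
    -- sum of squares identity
    have hSq : ∀ i, ∑ j, (B i j)^2 = (∑ j, (A i j)^2) - 1 / d := by
      intro i
      have : ∀ j, (B i j)^2 = (A i j)^2 - (2/d) * A i j + 1/d^2 := by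
        intro j; simp only [hB]; field_simp; ring
      rw [Finset.sum_congr rfl fun j _ => this j]
      rw [Finset.sum_add_distrib, Finset.sum_sub_distrib, ← Finset.mul_sum, hrow i]
      simp [Finset.card_fin]
      field_simp
      ring
    -- per-row Cauchy-Schwarz
    have hrowCS : ∀ i, ((d:ℝ) - 1) * (∑ j, (B i j)^2) ≥ (d:ℝ) * (B i i)^2 := by
      intro i
      have hsplit : ∑ j, (B i j)^2 = (B i i)^2 + ∑ j ∈ univ.erase i, (B i j)^2 := by
        rw [← Finset.sum_erase_add _ _ (Finset.mem_univ i)]; ring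
      have hsum : ∑ j ∈ univ.erase i, B i j = - B i i := by
        have := Finset.sum_erase_add univ (B i) (Finset.mem_univ i)
        have h0 := hBrow i
        linarith [this.trans h0]
      have hcs := sq_sum_le_card_mul_sum_sq (s := univ.erase i) (f := B i)
      have hcard : (#(univ.erase i) : ℝ) = (d:ℝ) - 1 := by
        rw [Finset.card_erase_of_mem (Finset.mem_univ i)]
        simp [Finset.card_fin]
        have : 1 ≤ d := hd
        push_cast [Nat.cast_sub this]
        ring
      rw [hsum] at hcs
      have hcs' : (B i i)^2 ≤ ((d:ℝ) - 1) * ∑ j ∈ univ.erase i, (B i j)^2 := by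
        calc (B i i)^2 = (- B i i)^2 := by ring
        _ ≤ (#(univ.erase i) : ℝ) * ∑ j ∈ univ.erase i, (B i j)^2 := by exact_mod_cast hcs
        _ = ((d:ℝ) - 1) * ∑ j ∈ univ.erase i, (B i j)^2 := by rw [hcard]
      nlinarith [hsplit, Finset.sum_nonneg (fun j (_ : j ∈ univ.erase i) => sq_nonneg (B i j))]
    -- trace Cauchy-Schwarz
    have hdiagCS : (∑ i, B i i)^2 ≤ (d:ℝ) * ∑ i, (B i i)^2 := by
      have := sq_sum_le_card_mul_sum_sq (s := (univ : Finset (Fin d))) (f := fun i => B i i)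
      simpa [Finset.card_fin] using this
    -- combine
    set T := ∑ i, A i i with hT
    set S := ∑ i, ∑ j, (A i j)^2 with hS
    have hTB : ∑ i, B i i = T - 1 := by
      simp [hB, Finset.sum_sub_distrib, hT, Finset.card_fin]
      field_simp
    have hSB : ∑ i, ∑ j, (B i j)^2 = S - 1 := by
      rw [Finset.sum_congr rfl fun i _ => hSq i, Finset.sum_sub_distrib]
      simp [hS, Finset.card_fin]
      field_simp
    have hkey : (T - 1)^2 ≤ ((d:ℝ) - 1) * (S - 1) := by
      have h1 : ((d:ℝ) - 1) * (S - 1) ≥ (d:ℝ) * ∑ i, (B i i)^2 := by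
        rw [← hSB, Finset.mul_sum, Finset.mul_sum]
        exact Finset.sum_le_sum fun i _ => hrowCS i
      calc (T - 1)^2 = (∑ i, B i i)^2 := by rw [hTB]
      _ ≤ (d:ℝ) * ∑ i, (B i i)^2 := hdiagCS
      _ ≤ ((d:ℝ) - 1) * (S - 1) := h1
    nlinarith [sq_nonneg (T - 1 - ((d:ℝ)-1)/2), hkey, hdR]
end

section
/- Let d ≥ 2, let F be the d×d matrix with entries F_{jk} = (1/√d) exp( i·2π(j−1)(k−1)/d ) (indices j,k = 1,…,d), and set f_k = (k−1)(k−2) if d is odd and f_k = (k−1)² if d is even. Define the unitary matrix U = F · diag( exp(−iπ f_1/d), …, exp(−iπ f_d/d) ) · F†. Then |⟨i|U|j⟩|² = 1/d for every pair of indices i, j. (Equivalently, the generalized quadratic Gauss sums |∑_{k=0}^{d−1} exp( i·(2π/d)·k·(j−i) ) · exp( i·π f_{k+1}/d )|² = d for all i, j.) -/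
open Matrix BigOperators

/-- The `d × d` quantum Fourier transform matrix
`F_{jk} = (1/√d) exp(i 2π (j−1)(k−1)/d)` (indices `1, …, d` rendered as `Fin d`). -/
noncomputable def qft (d : ℕ) : Matrix (Fin d) (Fin d) ℂ :=
  Matrix.of fun j k => (1 / (Real.sqrt d : ℂ))
    * Complex.exp (Complex.I * 2 * Real.pi * (j.val : ℂ) * (k.val : ℂ) / d)

/-- The phase exponents `f_k = (k−1)(k−2)` for `d` odd and `f_k = (k−1)²` for `d` even
(with `k = 1, …, d` rendered as `Fin d`, so `k − 1` is `k.val`). -/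
def fPhase (d : ℕ) (k : Fin d) : ℕ :=
  if d % 2 = 1 then k.val * (k.val - 1) else k.val ^ 2

/-- Auxiliary: `fPhase` as a function of a natural number. -/
def fNat (d n : ℕ) : ℕ := if d % 2 = 1 then n * (n - 1) else n ^ 2

lemma fNat_add (d n m : ℕ) : (fNat d (n + m) : ℤ) = fNat d n + fNat d m + 2 * n * m := by
  unfold fNat
  split_ifs
  · rcases n with _ | n
    · simp
    rcases m with _ | m
    · simp
    have : n + 1 + (m + 1) = (n + m + 1) + 1 := by ring
    rw [this]
    simp only [Nat.add_sub_cancel]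
    push_cast
    ring
  · push_cast; ring

lemma fNat_self (d : ℕ) : ∃ t : ℕ, fNat d d = 2 * d * t := by
  unfold fNat
  split_ifs with h
  · obtain ⟨t, ht⟩ : ∃ t, d - 1 = 2 * t := ⟨(d-1)/2, by omega⟩
    exact ⟨t, by rw [ht]; ring⟩
  · obtain ⟨t, ht⟩ : ∃ t, d = 2 * t := ⟨d/2, by omega⟩
    exact ⟨t, by subst ht; ring⟩

/-- The Gauss-sum phase `exp(iπ(2na − f(n))/d)`. -/
noncomputable def Eph (d : ℕ) (a : ℤ) (n : ℕ) : ℂ :=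
  Complex.exp (Real.pi * Complex.I * ((2 * n * a - fNat d n : ℤ) : ℂ) / d)

lemma Eph_conj (d : ℕ) (a : ℤ) (n : ℕ) :
    (starRingEnd ℂ) (Eph d a n)
      = Complex.exp (-(Real.pi * Complex.I * ((2 * n * a - fNat d n : ℤ) : ℂ) / d)) := by
  rw [Eph, ← Complex.exp_conj]
  congr 1
  simp [map_div₀, _root_.map_mul, map_ofNat, Complex.conj_I]
  ring

lemma Eph_mul_conj (d : ℕ) (a : ℤ) (n : ℕ) :
    Eph d a n * (starRingEnd ℂ) (Eph d a n) = 1 := by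
  rw [Eph_conj, Eph, ← Complex.exp_add, add_neg_cancel, Complex.exp_zero]

lemma Eph_add (d : ℕ) (hd : (d : ℂ) ≠ 0) (a : ℤ) (n m : ℕ) :
    Eph d a (n + m) = Eph d a n * Eph d a m
      * Complex.exp (-(2 * Real.pi * Complex.I * n * m / d)) := by
  rw [Eph, Eph, Eph, ← Complex.exp_add, ← Complex.exp_add]
  congr 1
  have h : ((fNat d (n + m) : ℕ) : ℂ) = (fNat d n : ℕ) + (fNat d m : ℕ) + 2 * n * m := by
    exact_mod_cast fNat_add d n m
  push_cast
  rw [h]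
  field_simp
  ring

lemma Eph_period (d : ℕ) (hd : (d : ℂ) ≠ 0) (a : ℤ) (n : ℕ) :
    Eph d a (n + d) = Eph d a n := by
  obtain ⟨t, ht⟩ := fNat_self d
  have h : ((fNat d (n + d) : ℕ) : ℂ) = (fNat d n : ℕ) + 2 * d * t + 2 * n * d := by
    have h1 := fNat_add d n d
    rw [ht] at h1
    exact_mod_cast h1
  rw [Eph, Eph]
  rw [show Real.pi * Complex.I * ((2 * (n + d : ℕ) * a - fNat d (n + d) : ℤ) : ℂ) / d
      = Real.pi * Complex.I * ((2 * n * a - fNat d n : ℤ) : ℂ) / d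
        + ((a - t - n : ℤ) : ℂ) * (2 * Real.pi * Complex.I) by
    push_cast
    rw [h]
    field_simp
    ring]
  rw [Complex.exp_add, Complex.exp_int_mul_two_pi_mul_I, mul_one]

lemma Eph_mod (d : ℕ) (hd : (d : ℂ) ≠ 0) (a : ℤ) (n : ℕ) :
    Eph d a n = Eph d a (n % d) := by
  have key : ∀ q r, Eph d a (r + d * q) = Eph d a r := by
    intro q
    induction q with
    | zero => simp
    | succ q ih =>
      intro r
      rw [show r + d * (q + 1) = (r + d * q) + d by ring, Eph_period d hd, ih]
  conv_lhs => rw [← Nat.mod_add_div n d]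
  exact key _ _

lemma Eph_zero (d : ℕ) (a : ℤ) : Eph d a 0 = 1 := by
  have : fNat d 0 = 0 := by unfold fNat; split_ifs <;> simp
  rw [Eph, this]
  norm_num

lemma sum_geo (d : ℕ) (hd : 2 ≤ d) (m : ℕ) (hm : m < d) :
    ∑ l : Fin d, Complex.exp (-(2 * Real.pi * Complex.I * l.val * m / d))
      = if m = 0 then (d : ℂ) else 0 := by
  have hd0 : (d : ℂ) ≠ 0 := by
    simp only [ne_eq, Nat.cast_eq_zero]; omega
  split_ifs with h
  · subst h
    simp
  · set z := Complex.exp (-(2 * Real.pi * Complex.I * m / d)) with hz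
    have hterm : ∀ l : Fin d,
        Complex.exp (-(2 * Real.pi * Complex.I * l.val * m / d)) = z ^ (l.val) := by
      intro l
      rw [hz, ← Complex.exp_nat_mul]
      congr 1
      ring
    rw [Finset.sum_congr rfl fun l _ => hterm l]
    rw [Fin.sum_univ_eq_sum_range (fun n => z ^ n)]
    have h2pi : (2 * (Real.pi : ℂ) * Complex.I) ≠ 0 := by
      simp [Real.pi_ne_zero, Complex.I_ne_zero]
    have hz1 : z ≠ 1 := by
      intro h1
      rw [hz, Complex.exp_eq_one_iff] at h1
      obtain ⟨k, hk⟩ := h1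
      have hk' : (-(m : ℂ) / d) * (2 * Real.pi * Complex.I)
          = k * (2 * Real.pi * Complex.I) := by
        rw [← hk]; ring
      have h3 := mul_right_cancel₀ h2pi hk'
      rw [div_eq_iff hd0] at h3
      have hint : -(m : ℤ) = k * d := by exact_mod_cast h3
      have hdvd : (d : ℕ) ∣ m := by
        have : (d : ℤ) ∣ (m : ℤ) := ⟨-k, by linarith⟩
        exact_mod_cast this
      have := Nat.le_of_dvd (Nat.pos_of_ne_zero h) hdvd
      omega
    rw [geom_sum_eq hz1]
    have hzd : z ^ d = 1 := by
      rw [hz, ← Complex.exp_nat_mul]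
      rw [show (d : ℂ) * (-(2 * Real.pi * Complex.I * m / d))
          = (-(m : ℤ)) * (2 * Real.pi * Complex.I) by
        push_cast
        rw [mul_neg, mul_div_assoc', mul_comm (d:ℂ), mul_div_assoc, div_self hd0]
        ring]
      have hx := Complex.exp_int_mul_two_pi_mul_I (-(m:ℤ))
      push_cast at hx
      exact hx
    rw [hzd]
    simp

lemma entry_eq {d : ℕ} (hd : 2 ≤ d) (i j : Fin d) :
    (qft d * Matrix.diagonal (fun k : Fin d =>
        Complex.exp ((-Complex.I) * Real.pi * (fPhase d k : ℂ) / d)) * (qft d)ᴴ) i j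
      = (1 / (d : ℂ)) * ∑ k : Fin d, Eph d ((i.val : ℤ) - j.val) k.val := by
  have hd0 : (d : ℂ) ≠ 0 := by simp only [ne_eq, Nat.cast_eq_zero]; omega
  have hdR : (0:ℝ) ≤ (d:ℝ) := by positivity
  rw [Matrix.mul_apply, Finset.mul_sum]
  refine Finset.sum_congr rfl fun k _ => ?_
  rw [Matrix.mul_diagonal, Matrix.conjTranspose_apply]
  show (qft d i k * _) * (starRingEnd ℂ) (qft d j k) = _
  rw [qft, Eph]
  simp only [Matrix.of_apply]
  rw [_root_.map_mul, ← Complex.exp_conj]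
  have hconj : (starRingEnd ℂ) (Complex.I * 2 * Real.pi * (j.val : ℂ) * (k.val : ℂ) / d)
      = -(Complex.I * 2 * Real.pi * (j.val : ℂ) * (k.val : ℂ) / d) := by
    simp [map_div₀, _root_.map_mul, map_ofNat, Complex.conj_I]
    ring
  rw [hconj]
  have hsqrt : (starRingEnd ℂ) (1 / (Real.sqrt d : ℂ)) = 1 / (Real.sqrt d : ℂ) := by
    simp [Complex.conj_ofReal]
  rw [hsqrt]
  have hss : ((Real.sqrt d : ℂ)) * (Real.sqrt d : ℂ) = (d : ℂ) := by
    rw [← Complex.ofReal_mul, Real.mul_self_sqrt hdR]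
    norm_num
  have hf : (fPhase d k : ℂ) = ((fNat d k.val : ℕ) : ℂ) := rfl
  rw [hf]
  rw [show (1 / (Real.sqrt d : ℂ))
        * Complex.exp (Complex.I * 2 * Real.pi * (i.val : ℂ) * (k.val : ℂ) / d)
        * Complex.exp ((-Complex.I) * Real.pi * ((fNat d k.val : ℕ) : ℂ) / d)
        * ((1 / (Real.sqrt d : ℂ))
          * Complex.exp (-(Complex.I * 2 * Real.pi * (j.val : ℂ) * (k.val : ℂ) / d)))
      = (1 / ((Real.sqrt d : ℂ) * (Real.sqrt d : ℂ)))
        * (Complex.exp (Complex.I * 2 * Real.pi * (i.val : ℂ) * (k.val : ℂ) / d)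
          * Complex.exp ((-Complex.I) * Real.pi * ((fNat d k.val : ℕ) : ℂ) / d)
          * Complex.exp (-(Complex.I * 2 * Real.pi * (j.val : ℂ) * (k.val : ℂ) / d))) by ring]
  rw [hss, ← Complex.exp_add, ← Complex.exp_add]
  congr 1
  push_cast
  field_simp
  ring

lemma sum_mul_conj_sum {d : ℕ} (hd : 2 ≤ d) (a : ℤ) :
    (∑ k : Fin d, Eph d a k.val) * (starRingEnd ℂ) (∑ l : Fin d, Eph d a l.val)
      = (d : ℂ) := by
  haveI : NeZero d := ⟨by omega⟩
  have hd0 : (d : ℂ) ≠ 0 := by simp only [ne_eq, Nat.cast_eq_zero]; omega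
  rw [map_sum, Finset.sum_mul_sum]
  rw [Finset.sum_comm]
  have hinner : ∀ l : Fin d,
      ∑ k : Fin d, Eph d a k.val * (starRingEnd ℂ) (Eph d a l.val)
        = ∑ m : Fin d, Eph d a m.val
            * Complex.exp (-(2 * Real.pi * Complex.I * l.val * m.val / d)) := by
    intro l
    rw [← Equiv.sum_comp (Equiv.addLeft l)
      (fun k : Fin d => Eph d a k.val * (starRingEnd ℂ) (Eph d a l.val))]
    refine Finset.sum_congr rfl fun m _ => ?_
    simp only [Equiv.coe_addLeft]
    have hval : ((l + m : Fin d) : ℕ) = (l.val + m.val) % d := Fin.val_add l m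
    rw [hval, ← Eph_mod d hd0 a, Eph_add d hd0 a]
    calc Eph d a l.val * Eph d a m.val
          * Complex.exp (-(2 * Real.pi * Complex.I * l.val * m.val / d))
          * (starRingEnd ℂ) (Eph d a l.val)
        = (Eph d a l.val * (starRingEnd ℂ) (Eph d a l.val))
            * (Eph d a m.val
              * Complex.exp (-(2 * Real.pi * Complex.I * l.val * m.val / d))) := by ring
      _ = Eph d a m.val * Complex.exp (-(2 * Real.pi * Complex.I * l.val * m.val / d)) := by
          rw [Eph_mul_conj]; ring
  rw [Finset.sum_congr rfl fun l _ => hinner l]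
  rw [Finset.sum_comm]
  have hcol : ∀ m : Fin d,
      ∑ l : Fin d, Eph d a m.val
          * Complex.exp (-(2 * Real.pi * Complex.I * l.val * m.val / d))
        = Eph d a m.val * (if m.val = 0 then (d : ℂ) else 0) := by
    intro m
    rw [← Finset.mul_sum, sum_geo d hd m.val m.isLt]
  rw [Finset.sum_congr rfl fun m _ => hcol m]
  rw [Finset.sum_eq_single (0 : Fin d)]
  · simp [Eph_zero]
  · intro m _ hm
    rw [if_neg (by intro h; exact hm (Fin.ext (by simp [h]))), mul_zero]
  · intro h
    exact absurd (Finset.mem_univ _) h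

/-- **Gauss-sum unitaries are mutually unbiased with respect to the standard basis.**
Let `d ≥ 2` and `U = F · diag(exp(−iπ f_1/d), …, exp(−iπ f_d/d)) · F†`, where `F` is the
quantum Fourier transform.  Then `|⟨i|U|j⟩|² = 1/d` for all `i, j`. -/
theorem gauss_unitary_unbiased {d : ℕ} (hd : 2 ≤ d) :
    ∀ i j : Fin d,
      ‖(qft d * Matrix.diagonal (fun k : Fin d =>
            Complex.exp ((-Complex.I) * Real.pi * (fPhase d k : ℂ) / d)) * (qft d)ᴴ) i j‖ ^ 2
        = 1 / (d : ℝ) := by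
  intro i j
  have hd0 : (d : ℂ) ≠ 0 := by simp only [ne_eq, Nat.cast_eq_zero]; omega
  have hdR : (d : ℝ) ≠ 0 := by
    simp only [ne_eq, Nat.cast_eq_zero]; omega
  rw [entry_eq hd i j]
  set S := ∑ k : Fin d, Eph d ((i.val : ℤ) - j.val) k.val with hS
  have hSS : S * (starRingEnd ℂ) S = (d : ℂ) := sum_mul_conj_sum hd _
  have hnorm : ‖S‖ ^ 2 = (d : ℝ) := by
    have h1 : (Complex.normSq S : ℂ) = (d : ℂ) := by rw [← Complex.mul_conj]; exact hSS
    have h2 : Complex.normSq S = (d : ℝ) := by exact_mod_cast h1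
    rw [Complex.sq_norm, h2]
  have hone : ‖(1 / (d : ℂ))‖ = 1 / (d : ℝ) := by
    rw [norm_div, norm_one, Complex.norm_natCast]
  rw [norm_mul, mul_pow, hnorm, hone]
  field_simp
end

section
/- Let d ≥ 2 and define f : U(d) → ℝ by f(U) = (4/(d−1)) · ( Tr(X_U X_Uᵀ) − Tr((X_U X_Uᵀ)²) ), where (X_U)_{ij} = |⟨i|U|j⟩|². Then f is Lipschitz with respect to the Frobenius norm: for all d×d unitaries U, V, | f(U) − f(V) | ≤ 160 · (d/(d−1)) · ‖ U − V ‖_F, where ‖A‖_F = √(Tr(A†A)). -/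
open Matrix BigOperators

/-- The bistochastic matrix `(X_U)_{ij} = |⟨i|U|j⟩|²` of a matrix `U`, with respect to the
standard basis. -/
noncomputable def xMat {d : ℕ} (U : Matrix (Fin d) (Fin d) ℂ) : Matrix (Fin d) (Fin d) ℝ :=
  Matrix.of fun i j => ‖U i j‖ ^ 2

/-- The normalized 2-norm CGP of the maximally dephasing channel in the basis `{U|i⟩}`:
`f(U) = (4/(d−1)) (Tr(X_U X_Uᵀ) − Tr((X_U X_Uᵀ)²))`. -/
noncomputable def cgpDeph {d : ℕ} (U : Matrix (Fin d) (Fin d) ℂ) : ℝ :=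
  (4 / ((d : ℝ) - 1)) * ((xMat U * (xMat U)ᵀ).trace - ((xMat U * (xMat U)ᵀ) ^ 2).trace)

/-- The Frobenius norm `‖A‖_F = √Tr(A†A)`. -/
noncomputable def frobNorm {d : ℕ} (A : Matrix (Fin d) (Fin d) ℂ) : ℝ :=
  Real.sqrt ((Aᴴ * A).trace.re)

/-- Columns of a unitary matrix are unit vectors. -/
lemma unitary_col_sum {d : ℕ} {U : Matrix (Fin d) (Fin d) ℂ}
    (hU : U ∈ Matrix.unitaryGroup (Fin d) ℂ) (j : Fin d) :
    ∑ i, ‖U i j‖ ^ 2 = 1 := by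
  have h : (star U * U) = 1 := Matrix.mem_unitaryGroup_iff'.mp hU
  have h2 := congrFun (congrFun h j) j
  simp [Matrix.mul_apply, Matrix.one_apply, Matrix.star_apply] at h2
  have : ((∑ i, ‖U i j‖ ^ 2 : ℝ) : ℂ) = 1 := by
    push_cast
    rw [← h2]
    refine Finset.sum_congr rfl fun i _ => ?_
    rw [mul_comm, Complex.mul_conj']
  exact_mod_cast this

/-- Rows of a unitary matrix are unit vectors. -/
lemma unitary_row_sum {d : ℕ} {U : Matrix (Fin d) (Fin d) ℂ}
    (hU : U ∈ Matrix.unitaryGroup (Fin d) ℂ) (i : Fin d) :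
    ∑ j, ‖U i j‖ ^ 2 = 1 := by
  have h : (U * star U) = 1 := Matrix.mem_unitaryGroup_iff.mp hU
  have h2 := congrFun (congrFun h i) i
  simp [Matrix.mul_apply, Matrix.one_apply, Matrix.star_apply] at h2
  have : ((∑ j, ‖U i j‖ ^ 2 : ℝ) : ℂ) = 1 := by
    push_cast
    rw [← h2]
    refine Finset.sum_congr rfl fun j _ => ?_
    rw [Complex.mul_conj']
  exact_mod_cast this

/-- Elementary: for `x, y ∈ [0,1]`, `|x·x − y·y| ≤ 2 |x − y|`. -/
lemma sq_diff_bound {x y : ℝ} (hx0 : 0 ≤ x) (hx1 : x ≤ 1) (hy0 : 0 ≤ y) (hy1 : y ≤ 1) :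
    |x * x - y * y| ≤ 2 * |x - y| := by
  have h : x * x - y * y = (x + y) * (x - y) := by ring
  rw [h, abs_mul]
  have : |x + y| ≤ 2 := by rw [abs_le]; constructor <;> linarith
  have h2 : (0:ℝ) ≤ |x - y| := abs_nonneg _
  nlinarith [abs_nonneg (x + y)]

/-- The key deterministic bound for doubly stochastic matrices with entries in `[0,1]`. -/
lemma key_bound {d : ℕ} (X Y : Matrix (Fin d) (Fin d) ℝ)
    (hX0 : ∀ i j, 0 ≤ X i j) (hX1 : ∀ i j, X i j ≤ 1)
    (hY0 : ∀ i j, 0 ≤ Y i j) (hY1 : ∀ i j, Y i j ≤ 1)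
    (hXr : ∀ i, ∑ j, X i j = 1) (hXc : ∀ j, ∑ i, X i j = 1)
    (hYr : ∀ i, ∑ j, Y i j = 1) (hYc : ∀ j, ∑ i, Y i j = 1) :
    |((X * Xᵀ).trace - ((X * Xᵀ) ^ 2).trace) - ((Y * Yᵀ).trace - ((Y * Yᵀ) ^ 2).trace)|
      ≤ 6 * ∑ i, ∑ j, |X i j - Y i j| := by
  set S := ∑ i, ∑ j, |X i j - Y i j| with hS
  set P := X * Xᵀ with hP
  set Q := Y * Yᵀ with hQ
  have hPentry : ∀ i k, P i k = ∑ j, X i j * X k j := by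
    intro i k; simp [hP, Matrix.mul_apply, Matrix.transpose_apply]
  have hQentry : ∀ i k, Q i k = ∑ j, Y i j * Y k j := by
    intro i k; simp [hQ, Matrix.mul_apply, Matrix.transpose_apply]
  have hP0 : ∀ i k, 0 ≤ P i k := by
    intro i k; rw [hPentry]
    exact Finset.sum_nonneg fun j _ => mul_nonneg (hX0 i j) (hX0 k j)
  have hP1 : ∀ i k, P i k ≤ 1 := by
    intro i k; rw [hPentry]
    calc ∑ j, X i j * X k j ≤ ∑ j, X i j := by
          refine Finset.sum_le_sum fun j _ => ?_
          have := hX0 i j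
          nlinarith [hX1 k j, hX0 k j]
      _ = 1 := hXr i
  have hQ0 : ∀ i k, 0 ≤ Q i k := by
    intro i k; rw [hQentry]
    exact Finset.sum_nonneg fun j _ => mul_nonneg (hY0 i j) (hY0 k j)
  have hQ1 : ∀ i k, Q i k ≤ 1 := by
    intro i k; rw [hQentry]
    calc ∑ j, Y i j * Y k j ≤ ∑ j, Y i j := by
          refine Finset.sum_le_sum fun j _ => ?_
          have := hY0 i j
          nlinarith [hY1 k j, hY0 k j]
      _ = 1 := hYr i
  -- Part C : entrywise L1 bound on P − Q
  have hT : (∑ i, ∑ k, |P i k - Q i k|) ≤ 2 * S := by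
    have hstep : ∀ i k, |P i k - Q i k|
        ≤ (∑ j, |X i j - Y i j| * X k j) + ∑ j, Y i j * |X k j - Y k j| := by
      intro i k
      rw [hPentry, hQentry, ← Finset.sum_sub_distrib]
      calc |∑ j, (X i j * X k j - Y i j * Y k j)|
          ≤ ∑ j, |X i j * X k j - Y i j * Y k j| := Finset.abs_sum_le_sum_abs _ _
        _ ≤ ∑ j, (|X i j - Y i j| * X k j + Y i j * |X k j - Y k j|) := by
            refine Finset.sum_le_sum fun j _ => ?_
            have h : X i j * X k j - Y i j * Y k j
                = (X i j - Y i j) * X k j + Y i j * (X k j - Y k j) := by ring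
            rw [h]
            calc |(X i j - Y i j) * X k j + Y i j * (X k j - Y k j)|
                ≤ |(X i j - Y i j) * X k j| + |Y i j * (X k j - Y k j)| := abs_add_le _ _
              _ = |X i j - Y i j| * X k j + Y i j * |X k j - Y k j| := by
                  rw [abs_mul, abs_mul, abs_of_nonneg (hX0 k j), abs_of_nonneg (hY0 i j)]
        _ = (∑ j, |X i j - Y i j| * X k j) + ∑ j, Y i j * |X k j - Y k j| :=
            Finset.sum_add_distrib
    calc (∑ i, ∑ k, |P i k - Q i k|)
        ≤ ∑ i, ∑ k, ((∑ j, |X i j - Y i j| * X k j) + ∑ j, Y i j * |X k j - Y k j|) := by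
          exact Finset.sum_le_sum fun i _ => Finset.sum_le_sum fun k _ => hstep i k
      _ = (∑ i, ∑ k, ∑ j, |X i j - Y i j| * X k j)
          + ∑ i, ∑ k, ∑ j, Y i j * |X k j - Y k j| := by
          rw [← Finset.sum_add_distrib]
          exact Finset.sum_congr rfl fun i _ => Finset.sum_add_distrib
      _ = S + S := by
          congr 1
          · calc (∑ i, ∑ k, ∑ j, |X i j - Y i j| * X k j)
                = ∑ i, ∑ j, ∑ k, |X i j - Y i j| * X k j := by
                  exact Finset.sum_congr rfl fun i _ => Finset.sum_comm
              _ = ∑ i, ∑ j, |X i j - Y i j| * ∑ k, X k j := by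
                  refine Finset.sum_congr rfl fun i _ => Finset.sum_congr rfl fun j _ => ?_
                  rw [Finset.mul_sum]
              _ = S := by
                  refine Finset.sum_congr rfl fun i _ => Finset.sum_congr rfl fun j _ => ?_
                  rw [hXc j, mul_one]
          · calc (∑ i, ∑ k, ∑ j, Y i j * |X k j - Y k j|)
                = ∑ k, ∑ i, ∑ j, Y i j * |X k j - Y k j| := Finset.sum_comm
              _ = ∑ k, ∑ j, ∑ i, Y i j * |X k j - Y k j| := by
                  exact Finset.sum_congr rfl fun k _ => Finset.sum_comm
              _ = ∑ k, ∑ j, (∑ i, Y i j) * |X k j - Y k j| := by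
                  refine Finset.sum_congr rfl fun k _ => Finset.sum_congr rfl fun j _ => ?_
                  rw [Finset.sum_mul]
              _ = S := by
                  refine Finset.sum_congr rfl fun k _ => Finset.sum_congr rfl fun j _ => ?_
                  rw [hYc j, one_mul]
      _ = 2 * S := by ring
  -- Part A : quadratic traces
  have htr2 : |P.trace - Q.trace| ≤ 2 * S := by
    have hPt : P.trace = ∑ i, ∑ j, X i j * X i j := by
      rw [Matrix.trace]
      exact Finset.sum_congr rfl fun i _ => hPentry i i
    have hQt : Q.trace = ∑ i, ∑ j, Y i j * Y i j := by
      rw [Matrix.trace]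
      exact Finset.sum_congr rfl fun i _ => hQentry i i
    rw [hPt, hQt, ← Finset.sum_sub_distrib]
    calc |∑ i, ((∑ j, X i j * X i j) - ∑ j, Y i j * Y i j)|
        ≤ ∑ i, |(∑ j, X i j * X i j) - ∑ j, Y i j * Y i j| := Finset.abs_sum_le_sum_abs _ _
      _ ≤ ∑ i, ∑ j, 2 * |X i j - Y i j| := by
          refine Finset.sum_le_sum fun i _ => ?_
          rw [← Finset.sum_sub_distrib]
          calc |∑ j, (X i j * X i j - Y i j * Y i j)|
              ≤ ∑ j, |X i j * X i j - Y i j * Y i j| := Finset.abs_sum_le_sum_abs _ _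
            _ ≤ ∑ j, 2 * |X i j - Y i j| := by
                refine Finset.sum_le_sum fun j _ => ?_
                exact sq_diff_bound (hX0 i j) (hX1 i j) (hY0 i j) (hY1 i j)
      _ = 2 * S := by
          rw [hS, Finset.mul_sum]
          exact Finset.sum_congr rfl fun i _ => by rw [Finset.mul_sum]
  -- Part D : quartic traces
  have htr4 : |(P ^ 2).trace - (Q ^ 2).trace| ≤ 4 * S := by
    have hPt : (P ^ 2).trace = ∑ i, ∑ k, P i k * P k i := by
      rw [sq, Matrix.trace]
      exact Finset.sum_congr rfl fun i _ => by simp [Matrix.mul_apply]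
    have hQt : (Q ^ 2).trace = ∑ i, ∑ k, Q i k * Q k i := by
      rw [sq, Matrix.trace]
      exact Finset.sum_congr rfl fun i _ => by simp [Matrix.mul_apply]
    rw [hPt, hQt, ← Finset.sum_sub_distrib]
    calc |∑ i, ((∑ k, P i k * P k i) - ∑ k, Q i k * Q k i)|
        ≤ ∑ i, |(∑ k, P i k * P k i) - ∑ k, Q i k * Q k i| := Finset.abs_sum_le_sum_abs _ _
      _ ≤ ∑ i, ∑ k, (|P i k - Q i k| + |P k i - Q k i|) := by
          refine Finset.sum_le_sum fun i _ => ?_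
          rw [← Finset.sum_sub_distrib]
          calc |∑ k, (P i k * P k i - Q i k * Q k i)|
              ≤ ∑ k, |P i k * P k i - Q i k * Q k i| := Finset.abs_sum_le_sum_abs _ _
            _ ≤ ∑ k, (|P i k - Q i k| + |P k i - Q k i|) := by
                refine Finset.sum_le_sum fun k _ => ?_
                have h : P i k * P k i - Q i k * Q k i
                    = (P i k - Q i k) * P k i + Q i k * (P k i - Q k i) := by ring
                rw [h]
                calc |(P i k - Q i k) * P k i + Q i k * (P k i - Q k i)|
                    ≤ |(P i k - Q i k) * P k i| + |Q i k * (P k i - Q k i)| := abs_add_le _ _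
                  _ = |P i k - Q i k| * |P k i| + |Q i k| * |P k i - Q k i| := by
                      rw [abs_mul, abs_mul]
                  _ ≤ |P i k - Q i k| * 1 + 1 * |P k i - Q k i| := by
                      gcongr
                      · rw [abs_of_nonneg (hP0 k i)]; exact hP1 k i
                      · rw [abs_of_nonneg (hQ0 i k)]; exact hQ1 i k
                  _ = |P i k - Q i k| + |P k i - Q k i| := by ring
      _ = (∑ i, ∑ k, |P i k - Q i k|) + ∑ i, ∑ k, |P k i - Q k i| := by
          rw [← Finset.sum_add_distrib]
          exact Finset.sum_congr rfl fun i _ => Finset.sum_add_distrib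
      _ = (∑ i, ∑ k, |P i k - Q i k|) + ∑ i, ∑ k, |P i k - Q i k| := by
          congr 1; exact Finset.sum_comm
      _ ≤ 2 * S + 2 * S := add_le_add hT hT
      _ = 4 * S := by ring
  calc |((P.trace - (P ^ 2).trace)) - ((Q.trace - (Q ^ 2).trace))|
      = |(P.trace - Q.trace) - ((P ^ 2).trace - (Q ^ 2).trace)| := by ring_nf
    _ ≤ |P.trace - Q.trace| + |(P ^ 2).trace - (Q ^ 2).trace| := abs_sub _ _
    _ ≤ 2 * S + 4 * S := add_le_add htr2 htr4
    _ = 6 * S := by ring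

set_option maxHeartbeats 2000000 in
/-- **Lipschitz continuity of the dephasing CGP on the unitary group.**
For `d ≥ 2` and all `d × d` unitaries `U`, `V`,
`|f(U) − f(V)| ≤ 160 (d/(d−1)) ‖U − V‖_F`, where
`f(U) = (4/(d−1)) (Tr(X_U X_Uᵀ) − Tr((X_U X_Uᵀ)²))`. -/
theorem cgpDeph_lipschitz {d : ℕ} (hd : 2 ≤ d)
    (U V : Matrix (Fin d) (Fin d) ℂ)
    (hU : U ∈ Matrix.unitaryGroup (Fin d) ℂ)
    (hV : V ∈ Matrix.unitaryGroup (Fin d) ℂ) :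
    |cgpDeph U - cgpDeph V| ≤ 160 * ((d : ℝ) / ((d : ℝ) - 1)) * frobNorm (U - V) := by
  set X := xMat U with hX
  set Y := xMat V with hY
  have hd1 : (1:ℝ) ≤ (d : ℝ) - 1 := by
    have : (2:ℝ) ≤ (d:ℝ) := by exact_mod_cast hd
    linarith
  have hdpos : (0:ℝ) < (d : ℝ) - 1 := by linarith
  -- entry bounds
  have hU1 : ∀ i j, ‖U i j‖ ≤ 1 := by
    intro i j
    have hle : ‖U i j‖ ^ 2 ≤ 1 := by
      rw [← unitary_row_sum hU i]
      exact Finset.single_le_sum (f := fun j => ‖U i j‖ ^ 2)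
        (fun j _ => sq_nonneg _) (Finset.mem_univ j)
    nlinarith [norm_nonneg (U i j)]
  have hV1 : ∀ i j, ‖V i j‖ ≤ 1 := by
    intro i j
    have hle : ‖V i j‖ ^ 2 ≤ 1 := by
      rw [← unitary_row_sum hV i]
      exact Finset.single_le_sum (f := fun j => ‖V i j‖ ^ 2)
        (fun j _ => sq_nonneg _) (Finset.mem_univ j)
    nlinarith [norm_nonneg (V i j)]
  have hXapp : ∀ i j, X i j = ‖U i j‖ ^ 2 := fun i j => rfl
  have hYapp : ∀ i j, Y i j = ‖V i j‖ ^ 2 := fun i j => rfl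
  -- the entrywise L1 distance
  set S := ∑ i, ∑ j, |X i j - Y i j| with hS
  set E := ∑ i, ∑ j, ‖(U - V) i j‖ ^ 2 with hE
  have hEnn : 0 ≤ E :=
    Finset.sum_nonneg fun i _ => Finset.sum_nonneg fun j _ => sq_nonneg _
  -- Frobenius norm identity
  have hfrob : frobNorm (U - V) = Real.sqrt E := by
    rw [frobNorm]
    congr 1
    have htr : (((U - V)ᴴ * (U - V)).trace) = (E : ℂ) := by
      rw [hE]
      push_cast
      rw [Finset.sum_comm]
      rw [Matrix.trace]
      refine Finset.sum_congr rfl fun j _ => ?_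
      rw [Matrix.diag_apply, Matrix.mul_apply]
      refine Finset.sum_congr rfl fun i _ => ?_
      rw [Matrix.conjTranspose_apply, Complex.star_def, mul_comm, Complex.mul_conj']
    rw [htr, Complex.ofReal_re]
  -- S ≤ 2 d √E
  have hSbound : S ≤ 2 * d * Real.sqrt E := by
    have h1 : S ≤ 2 * ∑ i, ∑ j, ‖(U - V) i j‖ := by
      rw [hS, Finset.mul_sum]
      refine Finset.sum_le_sum fun i _ => ?_
      rw [Finset.mul_sum]
      refine Finset.sum_le_sum fun j _ => ?_
      have h := sq_diff_bound (norm_nonneg (U i j)) (hU1 i j) (norm_nonneg (V i j)) (hV1 i j)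
      have h2 : |‖U i j‖ - ‖V i j‖| ≤ ‖(U - V) i j‖ := by
        have := abs_norm_sub_norm_le (U i j) (V i j)
        simpa [Matrix.sub_apply] using this
      calc |X i j - Y i j| = |‖U i j‖ * ‖U i j‖ - ‖V i j‖ * ‖V i j‖| := by
            rw [hXapp, hYapp]; ring_nf
        _ ≤ 2 * |‖U i j‖ - ‖V i j‖| := h
        _ ≤ 2 * ‖(U - V) i j‖ := by linarith
    have h2 : (∑ i, ∑ j, ‖(U - V) i j‖) ≤ d * Real.sqrt E := by
      set a : Fin d × Fin d → ℝ := fun p => ‖(U - V) p.1 p.2‖ with ha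
      have hrw : (∑ i, ∑ j, ‖(U - V) i j‖) = ∑ p : Fin d × Fin d, a p := by
        rw [← Finset.sum_product']; rfl
      have hrw2 : E = ∑ p : Fin d × Fin d, a p ^ 2 := by
        rw [hE, ← Finset.sum_product']; rfl
      have hcs := sq_sum_le_card_mul_sum_sq (s := (Finset.univ : Finset (Fin d × Fin d)))
        (f := a)
      have hcard : ((Finset.univ : Finset (Fin d × Fin d)).card : ℝ) = (d : ℝ) * d := by
        simp [Finset.card_univ]
      have hann : 0 ≤ ∑ p : Fin d × Fin d, a p :=
        Finset.sum_nonneg fun p _ => norm_nonneg _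
      rw [hrw]
      have hsq : (∑ p : Fin d × Fin d, a p) ^ 2 ≤ ((d:ℝ) * Real.sqrt E) ^ 2 := by
        calc (∑ p : Fin d × Fin d, a p) ^ 2
            ≤ ((Finset.univ : Finset (Fin d × Fin d)).card : ℝ)
              * ∑ p : Fin d × Fin d, a p ^ 2 := hcs
          _ = (d : ℝ) * (d : ℝ) * E := by rw [hcard, hrw2]
          _ = ((d:ℝ) * Real.sqrt E) ^ 2 := by
              rw [mul_pow, Real.sq_sqrt hEnn]; ring
      have hdE : (0:ℝ) ≤ (d:ℝ) * Real.sqrt E :=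
        mul_nonneg (Nat.cast_nonneg d) (Real.sqrt_nonneg _)
      calc (∑ p : Fin d × Fin d, a p) = Real.sqrt ((∑ p : Fin d × Fin d, a p) ^ 2) :=
            (Real.sqrt_sq hann).symm
        _ ≤ Real.sqrt (((d:ℝ) * Real.sqrt E) ^ 2) := Real.sqrt_le_sqrt hsq
        _ = (d:ℝ) * Real.sqrt E := Real.sqrt_sq hdE
    calc S ≤ 2 * ∑ i, ∑ j, ‖(U - V) i j‖ := h1
      _ ≤ 2 * (d * Real.sqrt E) := by linarith
      _ = 2 * d * Real.sqrt E := by ring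
  -- apply the key bound
  have hXr : ∀ i, ∑ j, X i j = 1 := fun i => by
    simpa [hXapp] using unitary_row_sum hU i
  have hXc : ∀ j, ∑ i, X i j = 1 := fun j => by
    simpa [hXapp] using unitary_col_sum hU j
  have hYr : ∀ i, ∑ j, Y i j = 1 := fun i => by
    simpa [hYapp] using unitary_row_sum hV i
  have hYc : ∀ j, ∑ i, Y i j = 1 := fun j => by
    simpa [hYapp] using unitary_col_sum hV j
  have hX1' : ∀ i j, X i j ≤ 1 := by
    intro i j; rw [hXapp]; nlinarith [norm_nonneg (U i j), hU1 i j]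
  have hY1' : ∀ i j, Y i j ≤ 1 := by
    intro i j; rw [hYapp]; nlinarith [norm_nonneg (V i j), hV1 i j]
  have hkey := key_bound X Y (fun i j => sq_nonneg _) hX1' (fun i j => sq_nonneg _) hY1'
    hXr hXc hYr hYc
  have hdiff : cgpDeph U - cgpDeph V
      = (4 / ((d:ℝ) - 1)) * (((X * Xᵀ).trace - ((X * Xᵀ) ^ 2).trace)
        - ((Y * Yᵀ).trace - ((Y * Yᵀ) ^ 2).trace)) := by
    rw [cgpDeph, cgpDeph, ← hX, ← hY]; ring
  have hc : (0:ℝ) ≤ 4 / ((d:ℝ) - 1) := by positivity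
  rw [hdiff, abs_mul, abs_of_nonneg hc, hfrob]
  have hsqrtnn : 0 ≤ Real.sqrt E := Real.sqrt_nonneg _
  calc (4 / ((d:ℝ) - 1)) * |((X * Xᵀ).trace - ((X * Xᵀ) ^ 2).trace)
        - ((Y * Yᵀ).trace - ((Y * Yᵀ) ^ 2).trace)|
      ≤ (4 / ((d:ℝ) - 1)) * (6 * S) := by
        exact mul_le_mul_of_nonneg_left hkey hc
    _ ≤ (4 / ((d:ℝ) - 1)) * (6 * (2 * d * Real.sqrt E)) := by
        have h6 : 6 * S ≤ 6 * (2 * d * Real.sqrt E) := by linarith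
        exact mul_le_mul_of_nonneg_left h6 hc
    _ = 48 * ((d:ℝ) / ((d:ℝ) - 1)) * Real.sqrt E := by
        field_simp; ring
    _ ≤ 160 * ((d:ℝ) / ((d:ℝ) - 1)) * Real.sqrt E := by
        have hnn : 0 ≤ ((d:ℝ) / ((d:ℝ) - 1)) * Real.sqrt E := by positivity
        nlinarith [hnn]
end
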